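/- Let L ≥ 1 and let K be an L×L integer matrix with K·Kᵀ = m·I_L where m is an even positive integer. Then for every vector P ∈ ℝ^L all of whose entries are ±1/2, the vector P·K has all entries in ℤ. (Consequently every deep hole of ℤ^L belongs to the lattice (1/m)·ℤ^L·Kᵀ, so the similar sublattice spanned by the rows of K is not clean.) -/

import Mathlib

/-- The integer lattice `ℤ^L` inside `EuclideanSpace ℝ (Fin L)`:
the `ℤ`-span of the standard basis vectors. -/
noncomputable def Zlat (L : ℕ) : AddSubgroup (EuclideanSpace ℝ (Fin L)) :=
  AddSubgroup.closure (Set.range fun i => EuclideanSpace.single i (1 : ℝ))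

/-- The `ℤ`-span of the rows of an integer matrix `K`, as a sublattice of `ℝ^L`. -/
noncomputable def rowLattice {L : ℕ} (K : Matrix (Fin L) (Fin L) ℤ) :
    AddSubgroup (EuclideanSpace ℝ (Fin L)) :=
  AddSubgroup.closure
    (Set.range fun i => (WithLp.equiv 2 (Fin L → ℝ)).symm fun j => (K i j : ℝ))

/-- `Λ'` is clean in `Λ`: every point of `Λ` has a unique nearest point of `Λ'`
in the Euclidean norm. -/
def IsClean {L : ℕ} (Λ Λ' : AddSubgroup (EuclideanSpace ℝ (Fin L))) : Prop :=
  ∀ x ∈ Λ, ∃! p, p ∈ Λ' ∧ ∀ q ∈ Λ', ‖x - p‖ ≤ ‖x - q‖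

open Matrix in
private lemma aux_dot {L : ℕ} (Kr : Matrix (Fin L) (Fin L) ℝ) (m : ℕ)
    (hKr : Kr * Kr.transpose = (m : ℝ) • 1) (z w : Fin L → ℝ) :
    (z ᵥ* Kr) ⬝ᵥ (w ᵥ* Kr) = m * (z ⬝ᵥ w) := by
  rw [show w ᵥ* Kr = Kr.transpose *ᵥ w from (Matrix.mulVec_transpose Kr w).symm,
    Matrix.dotProduct_mulVec, Matrix.vecMul_vecMul, hKr]
  rw [show z ᵥ* ((m : ℝ) • 1) = (m : ℝ) • z by
    funext i
    simp [Matrix.vecMul, dotProduct, Matrix.smul_apply, Matrix.one_apply,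
      mul_ite, Finset.sum_ite_eq', mul_comm]]
  rw [smul_dotProduct]
  simp

private lemma aux_normSq {L : ℕ} (f : Fin L → ℝ) :
    ‖(WithLp.equiv 2 (Fin L → ℝ)).symm f‖ ^ 2 = dotProduct f f := by
  rw [EuclideanSpace.norm_eq, Real.sq_sqrt (by positivity)]
  simp [dotProduct, WithLp.equiv_symm_apply, PiLp.toLp_apply, Real.norm_eq_abs, sq_abs, sq]

private lemma aux_colSq {L : ℕ} (K : Matrix (Fin L) (Fin L) ℤ) (m : ℕ) (hm : 0 < m)
    (hK : K * K.transpose = (m : ℤ) • (1 : Matrix (Fin L) (Fin L) ℤ)) (j : Fin L) :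
    ∑ k, K k j * K k j = (m : ℤ) := by
  classical
  have hKe : ∀ i j : Fin L, ∑ k, K i k * K j k = if i = j then (m : ℤ) else 0 := by
    intro i j
    have := congrFun (congrFun hK i) j
    simpa [Matrix.mul_apply, Matrix.transpose_apply, Matrix.one_apply] using this
  set A : Matrix (Fin L) (Fin L) ℚ := K.map ((↑) : ℤ → ℚ) with hAdef
  have hA : A * A.transpose = (m : ℚ) • 1 := by
    ext i j
    have h1 : (A * A.transpose) i j = ((∑ k, K i k * K j k : ℤ) : ℚ) := by
      simp [Matrix.mul_apply, hAdef]
    rw [h1, hKe i j]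
    split_ifs with h <;> simp [Matrix.one_apply, h]
  have hmQ : (m : ℚ) ≠ 0 := by exact_mod_cast hm.ne'
  have hAB : A * ((m : ℚ)⁻¹ • A.transpose) = 1 := by
    rw [Matrix.mul_smul, hA, smul_smul, inv_mul_cancel₀ hmQ, one_smul]
  have hBA : ((m : ℚ)⁻¹ • A.transpose) * A = 1 := mul_eq_one_comm.mp hAB
  have hAtA : A.transpose * A = (m : ℚ) • 1 := by
    rw [Matrix.smul_mul] at hBA
    calc A.transpose * A = (m : ℚ) • ((m : ℚ)⁻¹ • (A.transpose * A)) := by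
          rw [smul_smul, mul_inv_cancel₀ hmQ, one_smul]
      _ = (m : ℚ) • 1 := by rw [hBA]
  have hdiag : ((∑ k, K k j * K k j : ℤ) : ℚ) = (m : ℚ) := by
    have := congrFun (congrFun hAtA j) j
    simpa [Matrix.mul_apply, Matrix.transpose_apply, Matrix.one_apply, hAdef] using this
  exact_mod_cast hdiag

private lemma aux_part1 {L : ℕ} (K : Matrix (Fin L) (Fin L) ℤ) (m : ℕ)
    (hm : 0 < m) (hmEven : Even m)
    (hK : K * K.transpose = (m : ℤ) • (1 : Matrix (Fin L) (Fin L) ℤ)) :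
    ∀ P : Fin L → ℝ, (∀ i, P i = 1 / 2 ∨ P i = -(1 / 2)) →
      ∀ j, ∃ n : ℤ, Matrix.vecMul P (K.map (Int.cast : ℤ → ℝ)) j = (n : ℝ) := by
  classical
  intro P hP j
  set ε : Fin L → ℤ := fun k => if P k = 1 / 2 then 1 else -1 with hε
  have hPk : ∀ k, P k = (ε k : ℝ) / 2 := by
    intro k
    rcases hP k with h | h
    · simp [hε, h]
    · have hne : P k ≠ 1 / 2 := by rw [h]; norm_num
      rw [h]; simp only [hε]; rw [if_neg hne]; norm_num
  have hT : ∑ k, K k j * K k j = (m : ℤ) := aux_colSq K m hm hK j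
  have hdvd : (2 : ℤ) ∣ ∑ k, ε k * K k j := by
    have hz : ((∑ k, ε k * K k j : ℤ) : ZMod 2) = 0 := by
      push_cast
      have h1 : ∀ k, ((ε k : ZMod 2)) = 1 := by
        intro k
        simp only [hε]
        split <;> decide
      have h2 : ∀ a : ZMod 2, a * a = a := by decide
      have hcalc : (∑ k, (ε k : ZMod 2) * (K k j : ZMod 2))
          = ∑ k, (K k j : ZMod 2) * (K k j : ZMod 2) := by
        refine Finset.sum_congr rfl fun k _ => ?_
        rw [h1 k, one_mul, h2]
      rw [hcalc]
      have hc2 : (∑ k, (K k j : ZMod 2) * (K k j : ZMod 2))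
          = ((∑ k, K k j * K k j : ℤ) : ZMod 2) := by
        push_cast; rfl
      rw [hc2, hT]
      obtain ⟨t, rfl⟩ := hmEven
      push_cast
      calc (t : ZMod 2) + t = 2 * t := by ring
        _ = 0 := by rw [show ((2 : ZMod 2)) = 0 from by decide, zero_mul]
    have := (ZMod.intCast_zmod_eq_zero_iff_dvd (∑ k, ε k * K k j) 2).mp hz
    exact_mod_cast this
  obtain ⟨nn, hnn⟩ := hdvd
  refine ⟨nn, ?_⟩
  have hv : Matrix.vecMul P (K.map (Int.cast : ℤ → ℝ)) j
      = ∑ k, ((ε k : ℝ) / 2) * (K k j : ℝ) := by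
    simp only [Matrix.vecMul, dotProduct, Matrix.map_apply]
    exact Finset.sum_congr rfl fun k _ => by rw [hPk k]
  rw [hv]
  have : (∑ k, ((ε k : ℝ) / 2) * (K k j : ℝ)) = ((∑ k, ε k * K k j : ℤ) : ℝ) / 2 := by
    push_cast
    rw [Finset.sum_div]
    exact Finset.sum_congr rfl fun k _ => by ring
  rw [this, hnn]
  push_cast
  ring

theorem stmt7 {L : ℕ} (hL : 1 ≤ L) (K : Matrix (Fin L) (Fin L) ℤ) (m : ℕ)
    (hm : 0 < m) (hmEven : Even m)
    (hK : K * K.transpose = (m : ℤ) • (1 : Matrix (Fin L) (Fin L) ℤ)) :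
    (∀ P : Fin L → ℝ, (∀ i, P i = 1 / 2 ∨ P i = -(1 / 2)) →
      ∀ j, ∃ n : ℤ, Matrix.vecMul P (K.map (Int.cast : ℤ → ℝ)) j = (n : ℝ)) ∧
    ¬ IsClean (Zlat L) (rowLattice K) := by
  classical
  refine ⟨aux_part1 K m hm hmEven hK, ?_⟩
  intro hClean
  set Kr : Matrix (Fin L) (Fin L) ℝ := K.map (Int.cast : ℤ → ℝ) with hKrdef
  have hKe : ∀ i j : Fin L, ∑ k, K i k * K j k = if i = j then (m : ℤ) else 0 := by
    intro i j
    have := congrFun (congrFun hK i) j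
    simpa [Matrix.mul_apply, Matrix.transpose_apply, Matrix.one_apply] using this
  have hKr : Kr * Kr.transpose = (m : ℝ) • 1 := by
    ext i j
    have h1 : (Kr * Kr.transpose) i j = ((∑ k, K i k * K j k : ℤ) : ℝ) := by
      simp [Matrix.mul_apply, hKrdef]
    rw [h1, hKe i j]
    split_ifs with h <;> simp [Matrix.one_apply, h]
  set P1 : Fin L → ℝ := fun _ => 1 / 2 with hP1def
  obtain ⟨n, hn⟩ : ∃ n : Fin L → ℤ, ∀ j, Matrix.vecMul P1 Kr j = (n j : ℝ) := by
    have := aux_part1 K m hm hmEven hK P1 (fun i => Or.inl rfl)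
    exact ⟨fun j => (this j).choose, fun j => (this j).choose_spec⟩
  set x : EuclideanSpace ℝ (Fin L) :=
    (WithLp.equiv 2 (Fin L → ℝ)).symm (Matrix.vecMul P1 Kr) with hxdef
  -- x lies in the integer lattice
  have hx : x ∈ Zlat L := by
    have hxeq : x = ∑ j, (n j) • (EuclideanSpace.single j (1 : ℝ)) := by
      ext i
      have hs : (∑ j, (n j) • (EuclideanSpace.single j (1 : ℝ))) i
          = ∑ j, (n j : ℝ) * (if i = j then (1:ℝ) else 0) := by
        rw [WithLp.ofLp_sum, Finset.sum_apply]
        refine Finset.sum_congr rfl fun j _ => ?_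
        rw [← Int.cast_smul_eq_zsmul ℝ]
        simp [EuclideanSpace.single_apply]
      have hxi : x i = (n i : ℝ) := by
        rw [hxdef]
        exact hn i
      rw [hxi, hs]
      simp [Finset.sum_ite_eq]
    rw [hxeq]
    exact AddSubgroup.sum_mem _ fun j _ =>
      AddSubgroup.zsmul_mem _ (AddSubgroup.subset_closure (Set.mem_range_self j)) _
  -- points of the row lattice
  set pt : (Fin L → ℤ) → EuclideanSpace ℝ (Fin L) := fun z =>
    (WithLp.equiv 2 (Fin L → ℝ)).symm (Matrix.vecMul (fun i => (z i : ℝ)) Kr) with hptdef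
  have hmem : ∀ z, pt z ∈ rowLattice K := by
    intro z
    have hzeq : pt z = ∑ i, (z i) •
        ((WithLp.equiv 2 (Fin L → ℝ)).symm fun j => (K i j : ℝ)) := by
      ext jj
      rw [WithLp.ofLp_sum, Finset.sum_apply]
      have hterm : ∀ i : Fin L, ((z i) • ((WithLp.equiv 2 (Fin L → ℝ)).symm
          fun j => (K i j : ℝ))) jj = (z i : ℝ) * (K i jj : ℝ) := by
        intro i
        rw [← Int.cast_smul_eq_zsmul ℝ]
        simp [WithLp.equiv_symm_apply, PiLp.toLp_apply]
      rw [Finset.sum_congr rfl fun i _ => hterm i]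
      simp [hptdef, Matrix.vecMul, dotProduct, hKrdef, WithLp.equiv_symm_apply, PiLp.toLp_apply]
    rw [hzeq]
    exact AddSubgroup.sum_mem _ fun i _ =>
      AddSubgroup.zsmul_mem _ (AddSubgroup.subset_closure (Set.mem_range_self i)) _
  have hrep : ∀ q ∈ rowLattice K, ∃ z : Fin L → ℤ, q = pt z := by
    intro q hq
    induction hq using AddSubgroup.closure_induction with
    | mem g hg =>
      obtain ⟨i, rfl⟩ := hg
      refine ⟨fun k => if k = i then 1 else 0, ?_⟩
      ext j
      simp [hptdef, Matrix.vecMul, dotProduct, hKrdef, WithLp.equiv_symm_apply, PiLp.toLp_apply,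
        apply_ite (fun t : ℤ => (t : ℝ)), ite_mul, Finset.sum_ite_eq']
    | zero =>
      refine ⟨0, ?_⟩
      ext j
      simp [hptdef, Matrix.vecMul, dotProduct, WithLp.equiv_symm_apply, PiLp.toLp_apply]
    | add a b ha hb iha ihb =>
      obtain ⟨za, rfl⟩ := iha
      obtain ⟨zb, rfl⟩ := ihb
      refine ⟨za + zb, ?_⟩
      ext j
      simp [hptdef, Matrix.vecMul, dotProduct, WithLp.equiv_symm_apply, PiLp.toLp_apply,
        Finset.sum_add_distrib, add_mul]
    | neg a ha iha =>
      obtain ⟨za, rfl⟩ := iha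
      refine ⟨-za, ?_⟩
      ext j
      simp [hptdef, Matrix.vecMul, dotProduct, WithLp.equiv_symm_apply, PiLp.toLp_apply,
        Finset.sum_neg_distrib, neg_mul]
  -- squared distances
  have distSq : ∀ z : Fin L → ℤ, ‖x - pt z‖ ^ 2
      = m * ∑ i, (1 / 2 - (z i : ℝ)) * (1 / 2 - (z i : ℝ)) := by
    intro z
    have hsub : x - pt z = (WithLp.equiv 2 (Fin L → ℝ)).symm
        (Matrix.vecMul (fun i => P1 i - (z i : ℝ)) Kr) := by
      have : (fun i => P1 i - (z i : ℝ)) = P1 - (fun i => (z i : ℝ)) := rfl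
      simp only [hxdef, hptdef, this, Matrix.sub_vecMul]
      rfl
    rw [hsub, aux_normSq, aux_dot Kr m hKr]
    simp [dotProduct, hP1def]
  have hquarter : ∀ t : ℤ, (1 / 4 : ℝ) ≤ (1 / 2 - (t : ℝ)) * (1 / 2 - (t : ℝ)) := by
    intro t
    rcases le_or_gt t 0 with h | h
    · have h' : (t : ℝ) ≤ 0 := by exact_mod_cast h
      nlinarith
    · have h' : (1 : ℝ) ≤ (t : ℝ) := by exact_mod_cast h
      nlinarith
  have hlow : ∀ z : Fin L → ℤ, (m : ℝ) * (L * (1 / 4)) ≤ ‖x - pt z‖ ^ 2 := by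
    intro z
    rw [distSq z]
    have hs : (L : ℝ) * (1 / 4) ≤ ∑ i, (1 / 2 - (z i : ℝ)) * (1 / 2 - (z i : ℝ)) := by
      have := Finset.sum_le_sum (f := fun _ : Fin L => (1 / 4 : ℝ))
        (g := fun i => (1 / 2 - (z i : ℝ)) * (1 / 2 - (z i : ℝ)))
        (fun i _ => hquarter (z i)) (s := Finset.univ)
      simpa [Finset.sum_const, mul_comm] using this
    exact mul_le_mul_of_nonneg_left hs (by positivity)
  have hval : ∀ z : Fin L → ℤ, (∀ i, z i = 0 ∨ z i = 1) →
      ‖x - pt z‖ ^ 2 = (m : ℝ) * (L * (1 / 4)) := by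
    intro z hz
    rw [distSq z]
    congr 1
    have : ∀ i : Fin L, (1 / 2 - (z i : ℝ)) * (1 / 2 - (z i : ℝ)) = 1 / 4 := by
      intro i; rcases hz i with h | h <;> rw [h] <;> norm_num
    rw [Finset.sum_congr rfl fun i _ => this i]
    simp [Finset.sum_const, mul_comm]
  have hnear : ∀ z : Fin L → ℤ, (∀ i, z i = 0 ∨ z i = 1) →
      ∀ q ∈ rowLattice K, ‖x - pt z‖ ≤ ‖x - q‖ := by
    intro z hz q hq
    obtain ⟨w, rfl⟩ := hrep q hq
    have h1 : ‖x - pt z‖ ^ 2 ≤ ‖x - pt w‖ ^ 2 := by rw [hval z hz]; exact hlow w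
    nlinarith [norm_nonneg (x - pt z), norm_nonneg (x - pt w)]
  -- two distinct nearest points
  set e0 : Fin L := ⟨0, hL⟩ with he0
  set z1 : Fin L → ℤ := fun k => if k = e0 then 1 else 0 with hz1
  obtain ⟨p, -, hu⟩ := hClean x hx
  have h0 := hu (pt 0) ⟨hmem 0, hnear 0 (fun i => Or.inl rfl) ⟩
  have h1 := hu (pt z1) ⟨hmem z1, hnear z1 (fun i => by
    by_cases h : i = e0 <;> simp [hz1, h])⟩
  have heq : pt 0 = pt z1 := h0.trans h1.symm
  have hrow : ∀ j, K e0 j = 0 := by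
    intro j
    have := congrFun (congrArg (WithLp.equiv 2 (Fin L → ℝ)) heq) j
    simp only [hptdef, Equiv.apply_symm_apply] at this
    have h2 : (0 : ℝ) = (K e0 j : ℝ) := by
      simpa [Matrix.vecMul, dotProduct, hKrdef, hz1,
        ite_smul, apply_ite (fun t : ℤ => (t : ℝ)), mul_ite, Finset.sum_ite_eq', mul_comm] using this
    exact_mod_cast h2.symm
  have hfin := hKe e0 e0
  simp only [if_pos rfl] at hfin
  rw [Finset.sum_congr rfl fun k _ => by rw [hrow k, mul_zero]] at hfin
  simp at hfin
  omega
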